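/- Let d ≥ 1 and let {E_i}_{i=1}^n be a rank-one POVM on ℂ^d with E_i = e_i Π_i, where e_i > 0 and each Π_i is a rank-one orthogonal projection, which forms a 2-design in the sense that Σ_{i=1}^n e_i (Π_i ⊗ Π_i) = (I_{d²} + F)/(d+1), where F is the swap matrix on ℂ^d ⊗ ℂ^d (F(x ⊗ y) = y ⊗ x) and ⊗ is the Kronecker product. Then its orthogonality is O = Σ_{i,j} (tr(√E_i √E_j))² − 2d + n = 2d/(d+1) − 2d + n, and its disturbance is D = Σ_{l,m} (tr(√E_l √E_m))² − 2 Σ_l (tr √E_l)² + d² = d²(d−1)/(d+1). -/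

import Mathlib

open Matrix BigOperators Kronecker
open scoped ComplexOrder

/-- The positive semidefinite square root of a positive semidefinite matrix
(the Mathlib definition of December 2024, since removed from Mathlib). -/
noncomputable def Matrix.PosSemidef.sqrt {n : Type*} [Fintype n] [DecidableEq n]
    {A : Matrix n n ℂ} (hA : A.PosSemidef) : Matrix n n ℂ :=
  (hA.1.eigenvectorUnitary : Matrix n n ℂ) *
    diagonal ((↑) ∘ (Real.sqrt) ∘ hA.1.eigenvalues) *
    (star (hA.1.eigenvectorUnitary : Matrix n n ℂ))

/-- For `d ≥ 1` and a rank-one POVM `{E_i = e_i Π_i}_{i=1}^n` on `ℂ^d`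
(`e_i > 0`, `Π_i` rank-one orthogonal projections) forming a 2-design, i.e.
`Σ_i e_i (Π_i ⊗ Π_i) = (I + F)/(d+1)` with `F` the swap on `ℂ^d ⊗ ℂ^d`, the orthogonality is
`O = 2d/(d+1) − 2d + n` and the disturbance is `D = d²(d−1)/(d+1)`. -/
theorem two_design_povm_orthogonality_disturbance
    (d n : ℕ) (hd : 1 ≤ d)
    (e : Fin n → ℝ) (he : ∀ i, 0 < e i)
    (P : Fin n → Matrix (Fin d) (Fin d) ℂ)
    (hproj : ∀ i, (P i).IsHermitian ∧ P i * P i = P i ∧ (P i).trace = 1)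
    (E : Fin n → Matrix (Fin d) (Fin d) ℂ)
    (hEdef : ∀ i, E i = ((e i : ℝ) : ℂ) • P i)
    (hE : ∀ i, (E i).PosSemidef)
    (hsum : ∑ i, E i = 1)
    (F : Matrix (Fin d × Fin d) (Fin d × Fin d) ℂ)
    (hF : F = Matrix.of fun p q => if p.1 = q.2 ∧ p.2 = q.1 then 1 else 0)
    (h2design : ∑ i, ((e i : ℝ) : ℂ) • (P i ⊗ₖ P i)
      = ((d : ℂ) + 1)⁻¹ • ((1 : Matrix (Fin d × Fin d) (Fin d × Fin d) ℂ) + F)) :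
    (∑ i, ∑ j, (((hE i).sqrt * (hE j).sqrt).trace.re) ^ 2 - 2 * (d : ℝ) + (n : ℝ)
        = 2 * (d : ℝ) / ((d : ℝ) + 1) - 2 * (d : ℝ) + (n : ℝ))
    ∧ (∑ l, ∑ m, (((hE l).sqrt * (hE m).sqrt).trace.re) ^ 2
          - 2 * ∑ l, (((hE l).sqrt).trace.re) ^ 2 + (d : ℝ) ^ 2
        = (d : ℝ) ^ 2 * ((d : ℝ) - 1) / ((d : ℝ) + 1)) := by
  -- square roots
  have hsqrt : ∀ i, (hE i).sqrt = ((Real.sqrt (e i) : ℝ) : ℂ) • P i := by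
    intro i
    have hP : (P i).PosSemidef := by
      have h : (P i)ᴴ * P i = P i := by rw [(hproj i).1.eq, (hproj i).2.1]
      rw [← h]
      exact Matrix.posSemidef_conjTranspose_mul_self _
    have hB : (((Real.sqrt (e i) : ℝ) : ℂ) • P i).PosSemidef :=
      hP.smul (by exact_mod_cast Real.sqrt_nonneg (e i))
    have hsq : E i = (((Real.sqrt (e i) : ℝ) : ℂ) • P i) ^ 2 := by
      rw [pow_two, smul_mul_smul_comm, (hproj i).2.1, hEdef i, ← Complex.ofReal_mul,
        Real.mul_self_sqrt (he i).le]
    have h1 : (hE i).sqrt = (hE i).1.cfc Real.sqrt := by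
      simp only [Matrix.PosSemidef.sqrt, Matrix.IsHermitian.cfc, Unitary.conjStarAlgAut_apply]
      rfl
    rw [h1, ← Matrix.IsHermitian.cfc_eq]
    have hsa : IsSelfAdjoint (((Real.sqrt (e i) : ℝ) : ℂ) • P i) := hB.1
    rw [hsq, ← cfc_comp_pow Real.sqrt 2 _ Real.continuous_sqrt.continuousOn hsa]
    rw [cfc_congr (g := fun x : ℝ => x)]
    · exact cfc_id' ℝ _
    · intro x hx
      rw [hB.1.spectrum_real_eq_range_eigenvalues] at hx
      obtain ⟨k, rfl⟩ := hx
      exact Real.sqrt_sq (hB.eigenvalues_nonneg k)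
  have hne : ((d : ℂ) + 1) ≠ 0 := by
    intro h
    have := congrArg Complex.re h
    simp at this
    have : (0:ℝ) < (d:ℝ) + 1 := by positivity
    linarith [this]
  -- trace of P i * P j is real
  have him : ∀ i j, ((P i * P j).trace).im = 0 := by
    intro i j
    have h1 : (starRingEnd ℂ) ((P i * P j).trace) = (P i * P j).trace := by
      have : ((P i * P j)ᴴ).trace = star ((P i * P j).trace) := Matrix.trace_conjTranspose _
      rw [Matrix.conjTranspose_mul, (hproj i).1.eq, (hproj j).1.eq, Matrix.trace_mul_comm] at this
      exact this.symm
    exact Complex.conj_eq_iff_im.mp h1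
  -- trace formula
  have htr : ∀ i j, ((hE i).sqrt * (hE j).sqrt).trace
      = ((Real.sqrt (e i) * Real.sqrt (e j) : ℝ) : ℂ) * (P i * P j).trace := by
    intro i j
    rw [hsqrt i, hsqrt j, smul_mul_smul_comm, Matrix.trace_smul, smul_eq_mul,
      Complex.ofReal_mul]
  have hterm : ∀ i j, (((hE i).sqrt * (hE j).sqrt).trace.re) ^ 2
      = e i * e j * (((P i * P j).trace.re) ^ 2) := by
    intro i j
    rw [htr i j, Complex.mul_re, Complex.ofReal_im, zero_mul, sub_zero, Complex.ofReal_re,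
      mul_pow, mul_pow, Real.sq_sqrt (he i).le, Real.sq_sqrt (he j).le]
  -- the 2-design sum in ℂ
  have hC : ∑ i, ∑ j, (((e i : ℝ) : ℂ) * ((e j : ℝ) : ℂ)) * ((P i * P j).trace) ^ 2
      = 2 * (d : ℂ) / ((d : ℂ) + 1) := by
    have hFF : F * F = 1 := by
      subst hF
      ext ⟨a, b⟩ ⟨c, f⟩
      simp only [Matrix.mul_apply, Matrix.of_apply, Matrix.one_apply, Fintype.sum_prod_type]
      simp [ite_and, Finset.sum_ite_eq, Finset.sum_ite_eq', Prod.ext_iff]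
    have hFtr : F.trace = (d : ℂ) := by
      subst hF
      have : ∀ p : Fin d × Fin d, ((if p.1 = p.2 ∧ p.2 = p.1 then (1:ℂ) else 0))
          = (if p.1 = p.2 then (1:ℂ) else 0) := by
        rintro ⟨a, b⟩; by_cases h : a = b <;> simp [h]
      simp only [Matrix.trace, Matrix.diag, Matrix.of_apply, this, Fintype.sum_prod_type]
      simp [Finset.sum_ite_eq]
    have hmul : (∑ i, ((e i : ℝ) : ℂ) • (P i ⊗ₖ P i)) * (∑ j, ((e j : ℝ) : ℂ) • (P j ⊗ₖ P j))
        = ∑ i, ∑ j, ((((e i : ℝ) : ℂ) * ((e j : ℝ) : ℂ)) • ((P i * P j) ⊗ₖ (P i * P j))) := by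
      rw [Finset.sum_mul_sum]
      refine Finset.sum_congr rfl fun i _ => Finset.sum_congr rfl fun j _ => ?_
      rw [smul_mul_smul_comm, Matrix.mul_kronecker_mul]
    have h1 := congrArg Matrix.trace hmul
    rw [h2design, smul_mul_smul_comm] at h1
    simp only [Matrix.trace_sum, Matrix.trace_smul, Matrix.trace_kronecker, smul_eq_mul,
      add_mul, mul_add, one_mul, mul_one, Matrix.trace_add, hFF, hFtr, Matrix.trace_one] at h1
    rw [show (∑ i, ∑ j, (((e i : ℝ) : ℂ) * ((e j : ℝ) : ℂ)) * ((P i * P j).trace) ^ 2)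
        = ∑ i, ∑ j, ((e i : ℝ) : ℂ) * ((e j : ℝ) : ℂ) * ((P i * P j).trace * (P i * P j).trace)
        from Finset.sum_congr rfl fun i _ => Finset.sum_congr rfl fun j _ => by ring, ← h1]
    simp only [Fintype.card_prod, Fintype.card_fin, Nat.cast_mul]
    field_simp
    ring
  -- real double sum
  have hS : ∑ i, ∑ j, (((hE i).sqrt * (hE j).sqrt).trace.re) ^ 2
      = 2 * (d : ℝ) / ((d : ℝ) + 1) := by
    have h1 : (∑ i, ∑ j, (((e i : ℝ) : ℂ) * ((e j : ℝ) : ℂ)) * ((P i * P j).trace) ^ 2).re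
        = ∑ i, ∑ j, (((hE i).sqrt * (hE j).sqrt).trace.re) ^ 2 := by
      rw [Complex.re_sum]
      refine Finset.sum_congr rfl fun i _ => ?_
      rw [Complex.re_sum]
      refine Finset.sum_congr rfl fun j _ => ?_
      rw [hterm i j, ← Complex.ofReal_mul, pow_two, Complex.mul_re, Complex.ofReal_im,
        zero_mul, sub_zero, Complex.ofReal_re, Complex.mul_re, him i j, mul_zero, sub_zero,
        pow_two]
    rw [← h1, hC]
    rw [show 2 * (d : ℂ) / ((d : ℂ) + 1) = ((2 * (d : ℝ) / ((d : ℝ) + 1) : ℝ) : ℂ) by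
      push_cast; ring]
    exact Complex.ofReal_re _
  -- sum of weights
  have hesum : ∑ l, e l = (d : ℝ) := by
    have h1 := congrArg Matrix.trace hsum
    simp only [Matrix.trace_sum, Matrix.trace_one] at h1
    have h2 : ∀ l, (E l).trace = ((e l : ℝ) : ℂ) := by
      intro l
      rw [hEdef l, Matrix.trace_smul, (hproj l).2.2, smul_eq_mul, mul_one]
    rw [Finset.sum_congr rfl fun l _ => h2 l] at h1
    have : ((∑ l, e l : ℝ) : ℂ) = ((d : ℝ) : ℂ) := by push_cast at h1 ⊢; simpa using h1
    exact_mod_cast this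
  have hD : ∑ l, (((hE l).sqrt).trace.re) ^ 2 = (d : ℝ) := by
    rw [← hesum]
    refine Finset.sum_congr rfl fun l _ => ?_
    rw [hsqrt l, Matrix.trace_smul, (hproj l).2.2, smul_eq_mul, mul_one, Complex.ofReal_re,
      Real.sq_sqrt (he l).le]
  have hdne : ((d : ℝ) + 1) ≠ 0 := by positivity
  constructor
  · rw [hS]
  · rw [hS, hD]
    field_simp
    ring
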